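/- End-to-end plaintext correctness of BatchSMUL: let L, s be natural numbers, δ an integer, and for 1 ≤ i ≤ s let xᵢ, yᵢ be integers and r_{i,1}, r_{i,2} natural numbers such that 0 ≤ xᵢ + δ, 0 ≤ yᵢ + δ, xᵢ + δ + r_{i,1} < L, and yᵢ + δ + r_{i,2} < L. Define C = Σ_{i=1}^{s} ( L^(2i−1)·(xᵢ + r_{i,1} + δ) + L^(2i−2)·(yᵢ + r_{i,2} + δ) ). Then for every i, setting cᵢ = ⌊(C mod L^(2i)) / L^(2(i−1))⌋, aᵢ = ⌊cᵢ/L⌋ − δ and bᵢ = (cᵢ mod L) − δ, one has aᵢ = xᵢ + r_{i,1}, bᵢ = yᵢ + r_{i,2}, and aᵢ·bᵢ − r_{i,2}·(xᵢ + δ) − r_{i,1}·(yᵢ + δ) − r_{i,1}·r_{i,2} + δ·(r_{i,1} + r_{i,2}) = xᵢ·yᵢ. -/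
import Mathlib

/-- End-to-end plaintext correctness of the BatchSMUL protocol. -/
theorem batchSMUL_correct (L s : ℕ) (δ : ℤ) (x y : ℕ → ℤ) (r₁ r₂ : ℕ → ℕ)
    (hx0 : ∀ i ∈ Finset.Icc 1 s, 0 ≤ x i + δ)
    (hy0 : ∀ i ∈ Finset.Icc 1 s, 0 ≤ y i + δ)
    (hxL : ∀ i ∈ Finset.Icc 1 s, x i + δ + (r₁ i : ℤ) < (L : ℤ))
    (hyL : ∀ i ∈ Finset.Icc 1 s, y i + δ + (r₂ i : ℤ) < (L : ℤ))
    (C : ℤ)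
    (hC : C = ∑ i ∈ Finset.Icc 1 s,
      ((L : ℤ) ^ (2 * i - 1) * (x i + (r₁ i : ℤ) + δ) +
        (L : ℤ) ^ (2 * i - 2) * (y i + (r₂ i : ℤ) + δ))) :
    ∀ i ∈ Finset.Icc 1 s,
      (C % (L : ℤ) ^ (2 * i)) / (L : ℤ) ^ (2 * (i - 1)) / (L : ℤ) - δ
          = x i + (r₁ i : ℤ) ∧
      (C % (L : ℤ) ^ (2 * i)) / (L : ℤ) ^ (2 * (i - 1)) % (L : ℤ) - δ
          = y i + (r₂ i : ℤ) ∧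
      (x i + (r₁ i : ℤ)) * (y i + (r₂ i : ℤ))
          - (r₂ i : ℤ) * (x i + δ) - (r₁ i : ℤ) * (y i + δ)
          - (r₁ i : ℤ) * (r₂ i : ℤ) + δ * ((r₁ i : ℤ) + (r₂ i : ℤ))
        = x i * y i := by
  intro i hi
  rw [Finset.mem_Icc] at hi
  obtain ⟨j, rfl⟩ : ∃ j, i = j + 1 := ⟨i - 1, by omega⟩
  set d : ℕ → ℤ := fun k => x k + (r₁ k : ℤ) + δ with hd
  set e : ℕ → ℤ := fun k => y k + (r₂ k : ℤ) + δ with he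
  have hdig : ∀ k ∈ Finset.Icc 1 s,
      0 ≤ d k ∧ d k < (L : ℤ) ∧ 0 ≤ e k ∧ e k < (L : ℤ) := by
    intro k hk
    have h1 := hx0 k hk; have h2 := hy0 k hk
    have h3 := hxL k hk; have h4 := hyL k hk
    have h5 : (0:ℤ) ≤ (r₁ k : ℤ) := Int.natCast_nonneg _
    have h6 : (0:ℤ) ≤ (r₂ k : ℤ) := Int.natCast_nonneg _
    refine ⟨?_, ?_, ?_, ?_⟩ <;> simp only [hd, he] <;> linarith
  have hmem : j + 1 ∈ Finset.Icc 1 s := Finset.mem_Icc.mpr ⟨by omega, hi.2⟩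
  obtain ⟨hd0, hdL, he0, heL⟩ := hdig (j + 1) hmem
  have hL : 0 < (L : ℤ) := lt_of_le_of_lt hd0 hdL
  -- key bound on partial sums
  have key : ∀ m, (∀ k ∈ Finset.Icc 1 m, 0 ≤ d k ∧ d k < (L:ℤ) ∧ 0 ≤ e k ∧ e k < (L:ℤ)) →
      0 ≤ (∑ k ∈ Finset.Icc 1 m, ((L:ℤ)^(2*k-1) * d k + (L:ℤ)^(2*k-2) * e k)) ∧
      (∑ k ∈ Finset.Icc 1 m, ((L:ℤ)^(2*k-1) * d k + (L:ℤ)^(2*k-2) * e k)) < (L:ℤ)^(2*m) := by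
    intro m
    induction m with
    | zero => intro _; simp
    | succ n ih =>
      intro hdig'
      have hsub := ih (fun k hk => hdig' k (Finset.mem_Icc.mpr
        ⟨(Finset.mem_Icc.mp hk).1, le_trans (Finset.mem_Icc.mp hk).2 (Nat.le_succ n)⟩))
      obtain ⟨h0, h1⟩ := hsub
      obtain ⟨hdn0, hdnL, hen0, henL⟩ := hdig' (n+1) (Finset.mem_Icc.mpr ⟨by omega, le_refl _⟩)
      rw [Finset.sum_Icc_succ_top (by omega : 1 ≤ n + 1)]
      have e1 : 2 * (n+1) - 1 = 2*n + 1 := by omega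
      have e2 : 2 * (n+1) - 2 = 2*n := by omega
      have e3 : 2 * (n+1) = 2*n + 2 := by omega
      rw [e1, e2, e3]
      have hp : (0:ℤ) < (L:ℤ)^(2*n) := pow_pos hL _
      rw [pow_succ, pow_succ, pow_succ]
      constructor
      · have := mul_nonneg (mul_nonneg hp.le hL.le) hdn0
        have := mul_nonneg hp.le hen0
        linarith
      · nlinarith [mul_le_mul_of_nonneg_left (show d (n+1) ≤ (L:ℤ) - 1 by linarith)
          (mul_nonneg hp.le hL.le),
          mul_le_mul_of_nonneg_left (show e (n+1) ≤ (L:ℤ) - 1 by linarith) hp.le]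
  obtain ⟨hS0, hS1⟩ := key j (fun k hk => hdig k (Finset.mem_Icc.mpr
    ⟨(Finset.mem_Icc.mp hk).1, by have := (Finset.mem_Icc.mp hk).2; omega⟩))
  set S := ∑ k ∈ Finset.Icc 1 j, ((L:ℤ)^(2*k-1) * d k + (L:ℤ)^(2*k-2) * e k) with hS
  set T := ∑ k ∈ Finset.Ioc (j+1) s,
      ((L:ℤ)^(2*k-1-(2*j+2)) * d k + (L:ℤ)^(2*k-2-(2*j+2)) * e k) with hT
  have hT0 : 0 ≤ T := by
    apply Finset.sum_nonneg
    intro k hk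
    obtain ⟨hk1, hk2⟩ := Finset.mem_Ioc.mp hk
    obtain ⟨hkd, _, hke, _⟩ := hdig k (Finset.mem_Icc.mpr ⟨by omega, hk2⟩)
    have := pow_nonneg hL.le (2*k-1-(2*j+2))
    have := pow_nonneg hL.le (2*k-2-(2*j+2))
    nlinarith
  have hCdec : C = S + (L:ℤ)^(2*j) * (e (j+1) + (L:ℤ) * d (j+1)) + (L:ℤ)^(2*j+2) * T := by
    rw [hC, show Finset.Icc 1 s = Finset.Icc 1 (j+1) ∪ Finset.Ioc (j+1) s from by
      ext a
      simp only [Finset.mem_Icc, Finset.mem_Ioc, Finset.mem_union]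
      omega,
      Finset.sum_union (by
        rw [Finset.disjoint_left]
        intro a h1 h2
        simp only [Finset.mem_Icc, Finset.mem_Ioc] at h1 h2
        omega),
      Finset.sum_Icc_succ_top (by omega : 1 ≤ j + 1)]
    have e1 : 2 * (j+1) - 1 = 2*j + 1 := by omega
    have e2 : 2 * (j+1) - 2 = 2*j := by omega
    rw [e1, e2]
    have hIoc : ∑ k ∈ Finset.Ioc (j+1) s,
        ((L:ℤ)^(2*k-1) * (x k + (r₁ k:ℤ) + δ) + (L:ℤ)^(2*k-2) * (y k + (r₂ k:ℤ) + δ))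
        = (L:ℤ)^(2*j+2) * T := by
      rw [hT, Finset.mul_sum]
      apply Finset.sum_congr rfl
      intro k hk
      obtain ⟨hk1, _⟩ := Finset.mem_Ioc.mp hk
      have ha : (L:ℤ)^(2*k-1) = (L:ℤ)^(2*j+2) * (L:ℤ)^(2*k-1-(2*j+2)) := by
        rw [← pow_add]; congr 1; omega
      have hb : (L:ℤ)^(2*k-2) = (L:ℤ)^(2*j+2) * (L:ℤ)^(2*k-2-(2*j+2)) := by
        rw [← pow_add]; congr 1; omega
      rw [ha, hb]
      simp only [hd, he]
      ring
    rw [hIoc]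
    simp only [hd, he, hS]
    ring
  -- bounds for the low part
  set q : ℤ := e (j+1) + (L:ℤ) * d (j+1) with hq
  have hq0 : 0 ≤ q := by have := mul_nonneg hL.le hd0; linarith
  have hqlt : q < (L:ℤ)^2 := by nlinarith
  have hp : (0:ℤ) < (L:ℤ)^(2*j) := pow_pos hL _
  have hlow0 : 0 ≤ S + (L:ℤ)^(2*j) * q := by positivity
  have hlowlt : S + (L:ℤ)^(2*j) * q < (L:ℤ)^(2*j+2) := by
    have h2 : ((L:ℤ)^(2*j)) * q ≤ (L:ℤ)^(2*j) * ((L:ℤ)^2 - 1) := by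
      apply mul_le_mul_of_nonneg_left (by linarith) hp.le
    have : (L:ℤ)^(2*j+2) = (L:ℤ)^(2*j) * (L:ℤ)^2 := by rw [← pow_add]
    nlinarith
  have e3 : 2 * (j+1) = 2*j + 2 := by omega
  have e4 : 2 * ((j+1) - 1) = 2*j := by omega
  rw [e3, e4]
  have hmod : C % (L:ℤ)^(2*j+2) = S + (L:ℤ)^(2*j) * q := by
    rw [hCdec, Int.add_mul_emod_self_left, Int.emod_eq_of_lt hlow0 hlowlt]
  rw [hmod]
  have hdiv1 : (S + (L:ℤ)^(2*j) * q) / (L:ℤ)^(2*j) = q := by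
    rw [Int.add_mul_ediv_left _ _ (ne_of_gt hp), Int.ediv_eq_zero_of_lt hS0 hS1, zero_add]
  rw [hdiv1]
  have hdiv2 : q / (L:ℤ) = d (j+1) := by
    rw [hq, Int.add_mul_ediv_left _ _ (ne_of_gt hL), Int.ediv_eq_zero_of_lt he0 heL, zero_add]
  have hmod2 : q % (L:ℤ) = e (j+1) := by
    rw [hq, Int.add_mul_emod_self_left, Int.emod_eq_of_lt he0 heL]
  refine ⟨?_, ?_, by ring⟩
  · rw [hdiv2]; simp only [hd]; ring
  · rw [hmod2]; simp only [he]; ring
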